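/- (Telescoping Bregman divergence bound.) Run Algorithm 1 and let q_t(j) = Σ_{i∈[K]} w′_t(i,j). Fix an interval {t₁,…,t₂} ⊆ [T], a comparator u ∈ Δ_K, and an index j* ∈ ⋂_{t=t₁}^{t₂} 𝒥_t, and define ū ∈ Δ_{K×M} by ū(i,j*) = (1 − 1/T³)·u(i) + ε and ū(i,j) = ε for j ≠ j*. Then Σ_{t=t₁}^{t₂} ( D_ψ(ū, w′_t) − D_ψ(ū, w′_{t+1}) ) = D_ψ(ū, w′_{t₁}) − D_ψ(ū, w′_{t₂+1}) ≤ 4·log(K·M·T)/η(j*) + 32·log(K·M·T)/T² + Σ_{j∈[M]} ( q_{t₁}(j) − q_{t₂+1}(j) )/η(j). -/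

import Mathlib

open Finset

namespace OMS

/-- Number of learning rates: `M = ⌈log₂ T²⌉`. -/
def numLR (T : ℕ) : ℕ := Nat.clog 2 (T ^ 2)

/-- Learning rate `η(j) = 2^j / (16 T)`; `j : Fin (numLR T)` represents index `j+1 ∈ [M]`. -/
noncomputable def lr (T : ℕ) (j : Fin (numLR T)) : ℝ := 2 ^ ((j : ℕ) + 1) / (16 * T)

/-- Lower threshold `ε = 1/(K·M·T³)`. -/
noncomputable def epsLB (K T : ℕ) : ℝ := 1 / (K * numLR T * T ^ 3)

/-- Probability simplex on `Fin K`. -/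
def simplex (K : ℕ) : Set (Fin K → ℝ) :=
  {p | (∀ i, 0 ≤ p i) ∧ ∑ i, p i = 1}

/-- Probability simplex on expert × learning-rate pairs. -/
def simplex2 (K T : ℕ) : Set (Fin K → Fin (numLR T) → ℝ) :=
  {w | (∀ i j, 0 ≤ w i j) ∧ ∑ i, ∑ j, w i j = 1}

/-- Weighted negative-entropy regularizer `ψ`. -/
noncomputable def psi (K T : ℕ) (w : Fin K → Fin (numLR T) → ℝ) : ℝ :=
  ∑ i, ∑ j, (1 / lr T j) * w i j * Real.log (w i j)

/-- Bregman divergence `D_ψ(y,x)` of the weighted negative-entropy regularizer. -/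
noncomputable def breg (K T : ℕ) (y x : Fin K → Fin (numLR T) → ℝ) : ℝ :=
  psi K T y - psi K T x -
    ∑ i, ∑ j, (1 / lr T j) * (Real.log (x i j) + 1) * (y i j - x i j)

/-- Decision set `Ω` for an active set `J` of learning rates. -/
def decisionSet (K T : ℕ) (J : Set (Fin (numLR T))) :
    Set (Fin K → Fin (numLR T) → ℝ) :=
  {w | w ∈ simplex2 K T ∧ (∀ i, ∀ j ∈ J, epsLB K T ≤ w i j) ∧
      (∀ i, ∀ j, j ∉ J → w i j = epsLB K T)}

/-- A run of Algorithm 1: trajectories of losses, predictions, weights, penalties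
and played distributions. -/
structure Run (K T : ℕ) where
  loss : ℕ → Fin K → ℝ
  pred : ℕ → Fin K → ℝ
  w' : ℕ → Fin K → Fin (numLR T) → ℝ
  w : ℕ → Fin K → Fin (numLR T) → ℝ
  L : ℕ → Fin (numLR T) → ℝ
  p : ℕ → Fin K → ℝ

variable {K T : ℕ}

/-- Prediction error `r_t(i) = ℓ_t(i) − m_t(i)`. -/
def Run.r (R : Run K T) (t : ℕ) (i : Fin K) : ℝ := R.loss t i - R.pred t i

/-- Active set `𝒥_t = {j : L_t(j) ≤ 1}`. -/
def Run.Jset (R : Run K T) (t : ℕ) : Set (Fin (numLR T)) := {j | R.L t j ≤ 1}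

open Classical in
/-- Active set `𝒥_t` as a finite set. -/
noncomputable def Run.Jfin (R : Run K T) (t : ℕ) : Finset (Fin (numLR T)) :=
  Finset.univ.filter fun j => R.L t j ≤ 1

/-- Correction term `a_t(i,j) = 32 η(j) r_t(i)²`. -/
noncomputable def Run.corr (R : Run K T) (t : ℕ) (i : Fin K) (j : Fin (numLR T)) : ℝ :=
  32 * lr T j * (R.r t i) ^ 2

open Classical in
/-- The constraints defining a run of Algorithm 1. -/
structure IsRun (R : Run K T) : Prop where
  loss_mem : ∀ t ∈ Finset.Icc 1 T, ∀ i, R.loss t i ∈ Set.Icc (0 : ℝ) 1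
  pred_mem : ∀ t ∈ Finset.Icc 1 T, ∀ i, R.pred t i ∈ Set.Icc (0 : ℝ) 1
  w'_init : ∀ i j, R.w' 1 i j = lr T j ^ 2 / (K * ∑ j', lr T j' ^ 2)
  L_init : ∀ j, R.L 1 j = 0
  w_mem : ∀ t ∈ Finset.Icc 1 T, R.w t ∈ decisionSet K T (R.Jset t)
  w_min : ∀ t ∈ Finset.Icc 1 T, ∀ v ∈ decisionSet K T (R.Jset t),
      (∑ i, ∑ j, R.pred t i * R.w t i j) + breg K T (R.w t) (R.w' t) ≤
      (∑ i, ∑ j, R.pred t i * v i j) + breg K T v (R.w' t)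
  p_def : ∀ t ∈ Finset.Icc 1 T, ∀ i, R.p t i =
      (∑ j ∈ R.Jfin t, R.w t i j) / (∑ i', ∑ j ∈ R.Jfin t, R.w t i' j)
  w'_mem : ∀ t ∈ Finset.Icc 1 T, R.w' (t + 1) ∈ decisionSet K T (R.Jset t)
  w'_min : ∀ t ∈ Finset.Icc 1 T, ∀ v ∈ decisionSet K T (R.Jset t),
      (∑ i, ∑ j, (R.loss t i + R.corr t i j) * R.w' (t + 1) i j) +
        breg K T (R.w' (t + 1)) (R.w' t) ≤
      (∑ i, ∑ j, (R.loss t i + R.corr t i j) * v i j) + breg K T v (R.w' t)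
  L_upd : ∀ t ∈ Finset.Icc 1 T, ∀ j, R.L (t + 1) j = R.L t j +
      ∑ i, (if 1 < 32 * lr T j * |R.r t i| then R.w t i j * R.r t i else 0)

end OMS


private lemma tele_sum (f : ℕ → ℝ) (a : ℕ) : ∀ b, a ≤ b →
    ∑ t ∈ Finset.Icc a b, (f t - f (t + 1)) = f a - f (b + 1) := by
  intro b
  induction b with
  | zero => intro h; interval_cases a; simp
  | succ n ih =>
    intro h
    rcases Nat.lt_or_ge a (n+1) with h' | h'
    · rw [Finset.sum_Icc_succ_top (by omega : a ≤ n + 1), ih (by omega)]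
      ring
    · have : a = n + 1 := by omega
      subst this
      simp

lemma OMS.breg_expand (K T : ℕ) (y x : Fin K → Fin (OMS.numLR T) → ℝ) :
    OMS.breg K T y x = OMS.psi K T y +
      ∑ i, ∑ j, (1 / OMS.lr T j) * (x i j - y i j - y i j * Real.log (x i j)) := by
  unfold OMS.breg OMS.psi
  rw [sub_sub, sub_eq_add_neg]
  congr 1
  rw [neg_eq_iff_eq_neg, ← Finset.sum_neg_distrib, ← Finset.sum_add_distrib]
  refine Finset.sum_congr rfl fun i _ => ?_
  rw [← Finset.sum_neg_distrib, ← Finset.sum_add_distrib]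
  refine Finset.sum_congr rfl fun j _ => ?_
  ring


set_option maxHeartbeats 1000000 in
open OMS in
/-- Telescoping Bregman divergence bound along an interval. -/
theorem telescoping_bregman_bound (K T : ℕ) (hK : 1 ≤ K) (hT : 2 ≤ T)
    (R : OMS.Run K T) (hR : OMS.IsRun R)
    (t₁ t₂ : ℕ) (ht₁ : 1 ≤ t₁) (ht₁₂ : t₁ ≤ t₂) (ht₂ : t₂ ≤ T)
    (u : Fin K → ℝ) (hu : u ∈ OMS.simplex K)
    (jstar : Fin (OMS.numLR T))
    (hjstar : ∀ t ∈ Finset.Icc t₁ t₂, jstar ∈ R.Jset t)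
    (ubar : Fin K → Fin (OMS.numLR T) → ℝ)
    (hubar : ∀ i j, ubar i j =
      if j = jstar then (1 - 1 / (T : ℝ) ^ 3) * u i + OMS.epsLB K T
      else OMS.epsLB K T) :
    (∑ t ∈ Finset.Icc t₁ t₂,
        (OMS.breg K T ubar (R.w' t) - OMS.breg K T ubar (R.w' (t + 1)))
      = OMS.breg K T ubar (R.w' t₁) - OMS.breg K T ubar (R.w' (t₂ + 1))) ∧
    OMS.breg K T ubar (R.w' t₁) - OMS.breg K T ubar (R.w' (t₂ + 1)) ≤
      4 * Real.log ((K : ℝ) * OMS.numLR T * T) / OMS.lr T jstar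
      + 32 * Real.log ((K : ℝ) * OMS.numLR T * T) / (T : ℝ) ^ 2
      + ∑ j, ((∑ i, R.w' t₁ i j) - ∑ i, R.w' (t₂ + 1) i j) / OMS.lr T j := by
  classical
  have hT2r : (2:ℝ) ≤ (T:ℝ) := by exact_mod_cast hT
  have hTpos : (0:ℝ) < T := by linarith
  have hK1r : (1:ℝ) ≤ (K:ℝ) := by exact_mod_cast hK
  have hKpos : (0:ℝ) < K := by linarith
  -- M ≥ 2
  have hM2 : 2 ≤ OMS.numLR T := by
    by_contra h
    push_neg at h
    have h1 : T ^ 2 ≤ 2 ^ OMS.numLR T := Nat.le_pow_clog (by norm_num) _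
    have h2 : 2 ^ OMS.numLR T ≤ 2 ^ 1 := Nat.pow_le_pow_right (by norm_num) (by omega)
    have h3 : 2 ^ 2 ≤ T ^ 2 := Nat.pow_le_pow_left hT 2
    omega
  have hM2r : (2:ℝ) ≤ (OMS.numLR T : ℝ) := by exact_mod_cast hM2
  have hMpos : (0:ℝ) < (OMS.numLR T : ℝ) := by linarith
  -- 2^M ≤ 2 T²
  have h2M : 2 ^ OMS.numLR T ≤ 2 * T ^ 2 := by
    have h4 : (4:ℕ) ≤ T ^ 2 := by
      have := Nat.pow_le_pow_left hT 2; omega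
    have h : 2 ^ (Nat.clog 2 (T ^ 2)).pred < T ^ 2 :=
      Nat.pow_pred_clog_lt_self (b := 2) (by norm_num) (x := T ^ 2) (by omega)
    have hMp : OMS.numLR T = Nat.clog 2 (T ^ 2) := rfl
    rw [← hMp, Nat.pred_eq_sub_one] at h
    have he : 2 ^ OMS.numLR T = 2 * 2 ^ (OMS.numLR T - 1) := by
      rw [← pow_succ']
      congr 1
      omega
    omega
  have h2Mr : (2:ℝ) ^ OMS.numLR T ≤ 2 * (T:ℝ) ^ 2 := by exact_mod_cast h2M
  -- learning rate bounds
  have hlr_pos : ∀ j : Fin (OMS.numLR T), 0 < OMS.lr T j := by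
    intro j
    unfold OMS.lr
    exact div_pos (by positivity) (by linarith)
  have hlr_ge : ∀ j : Fin (OMS.numLR T), 1 / (8 * (T:ℝ)) ≤ OMS.lr T j := by
    intro j
    unfold OMS.lr
    rw [div_le_div_iff₀ (by linarith) (by linarith)]
    have h2 : (2:ℝ) ≤ 2 ^ ((j:ℕ) + 1) := by
      calc (2:ℝ) = 2 ^ 1 := by norm_num
      _ ≤ 2 ^ ((j:ℕ) + 1) := by
        apply pow_le_pow_right₀ (by norm_num)
        omega
    nlinarith
  have hlr_le : ∀ j : Fin (OMS.numLR T), OMS.lr T j ≤ (T:ℝ) / 8 := by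
    intro j
    unfold OMS.lr
    rw [div_le_div_iff₀ (by linarith) (by norm_num)]
    have h2 : (2:ℝ) ^ ((j:ℕ) + 1) ≤ 2 ^ OMS.numLR T := by
      apply pow_le_pow_right₀ (by norm_num)
      have := j.isLt
      omega
    nlinarith
  have hinv_lr : ∀ j : Fin (OMS.numLR T), 1 / OMS.lr T j ≤ 8 * (T:ℝ) := by
    intro j
    rw [div_le_iff₀ (hlr_pos j)]
    have := mul_le_mul_of_nonneg_left (hlr_ge j) (by linarith : (0:ℝ) ≤ 8 * (T:ℝ))
    have he : 8 * (T:ℝ) * (1 / (8 * (T:ℝ))) = 1 := by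
      field_simp
    linarith
  -- epsilon
  have heps : OMS.epsLB K T = 1 / ((K:ℝ) * (OMS.numLR T : ℝ) * (T:ℝ) ^ 3) := by
    unfold OMS.epsLB
    norm_num
  have heps_pos : 0 < OMS.epsLB K T := by
    rw [heps]
    positivity
  -- the constant C and B
  set C : ℝ := 2 * (K:ℝ) * (OMS.numLR T : ℝ) * (T:ℝ) ^ 4 with hCdef
  have hCpos : 0 < C := by positivity
  have hTsq : (4:ℝ) ≤ (T:ℝ) ^ 2 := by nlinarith
  have hT4 : (16:ℝ) ≤ (T:ℝ) ^ 4 := by nlinarith [hTsq, sq_nonneg ((T:ℝ) ^ 2 - 4)]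
  have hKM2 : (2:ℝ) ≤ (K:ℝ) * (OMS.numLR T : ℝ) := by nlinarith
  have hC1 : (1:ℝ) ≤ C := by rw [hCdef]; nlinarith
  set B : ℝ := Real.log C with hBdef
  have hBnn : 0 ≤ B := Real.log_nonneg hC1
  set L : ℝ := Real.log ((K:ℝ) * (OMS.numLR T : ℝ) * (T:ℝ)) with hLdef
  have hB4L : B ≤ 4 * L := by
    have hKMT : (0:ℝ) < (K:ℝ) * (OMS.numLR T : ℝ) * (T:ℝ) := by positivity
    have hK3 : (1:ℝ) ≤ (K:ℝ) ^ 3 := one_le_pow₀ hK1r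
    have hK4 : (K:ℝ) ≤ (K:ℝ) ^ 4 := by
      nlinarith [mul_le_mul_of_nonneg_left hK3 (by linarith : (0:ℝ) ≤ (K:ℝ))]
    have hM3 : (8:ℝ) ≤ (OMS.numLR T : ℝ) ^ 3 := by
      have := pow_le_pow_left₀ (by norm_num : (0:ℝ) ≤ 2) hM2r 3
      norm_num at this
      linarith
    have hM4 : 2 * (OMS.numLR T : ℝ) ≤ (OMS.numLR T : ℝ) ^ 4 := by
      nlinarith [mul_le_mul_of_nonneg_left hM3 (by linarith : (0:ℝ) ≤ (OMS.numLR T : ℝ))]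
    have hineq : C ≤ ((K:ℝ) * (OMS.numLR T : ℝ) * (T:ℝ)) ^ 4 := by
      have he : ((K:ℝ) * (OMS.numLR T : ℝ) * (T:ℝ)) ^ 4
          = (K:ℝ) ^ 4 * (OMS.numLR T : ℝ) ^ 4 * (T:ℝ) ^ 4 := by ring
      rw [he, hCdef]
      have h1 : 2 * (K:ℝ) * (OMS.numLR T : ℝ) ≤ (K:ℝ) ^ 4 * (OMS.numLR T : ℝ) ^ 4 := by
        nlinarith [mul_le_mul hK4 hM4 (by linarith) (by positivity : (0:ℝ) ≤ (K:ℝ) ^ 4)]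
      nlinarith [pow_pos hTpos 4]
    have hlog := Real.log_le_log hCpos hineq
    rw [Real.log_pow] at hlog
    push_cast at hlog
    rw [hBdef, hLdef]
    linarith
  -- lower bound on w' t₁
  have hw1 : ∀ i j, 1 / C ≤ R.w' t₁ i j := by
    intro i j
    rcases eq_or_lt_of_le ht₁ with h1 | h1
    · -- t₁ = 1
      rw [← h1, hR.w'_init i j]
      have hsumpos : 0 < ∑ j' : Fin (OMS.numLR T), OMS.lr T j' ^ 2 :=
        Finset.sum_pos (fun j' _ => pow_pos (hlr_pos j') 2) ⟨jstar, Finset.mem_univ _⟩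
      have hsum_ub : ∑ j' : Fin (OMS.numLR T), OMS.lr T j' ^ 2
          ≤ (OMS.numLR T : ℝ) * ((T:ℝ) ^ 2 / 64) := by
        have h := Finset.sum_le_card_nsmul Finset.univ
          (fun j' : Fin (OMS.numLR T) => OMS.lr T j' ^ 2)
          ((T:ℝ) ^ 2 / 64) (fun j' _ => by
            have h := hlr_le j'
            have h0 := (hlr_pos j').le
            nlinarith)
        simpa [Finset.card_univ, nsmul_eq_mul] using h
      have hnum_lb : 1 / (64 * (T:ℝ) ^ 2) ≤ OMS.lr T j ^ 2 := by
        have h := hlr_ge j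
        have h0 : (0:ℝ) ≤ 1 / (8 * (T:ℝ)) := by positivity
        have he : (1 / (8 * (T:ℝ))) ^ 2 = 1 / (64 * (T:ℝ) ^ 2) := by
          rw [div_pow, mul_pow]; norm_num
        nlinarith
      rw [div_le_div_iff₀ hCpos (mul_pos hKpos hsumpos)]
      have h1' : (K:ℝ) * (∑ j' : Fin (OMS.numLR T), OMS.lr T j' ^ 2)
          ≤ (K:ℝ) * ((OMS.numLR T : ℝ) * ((T:ℝ) ^ 2 / 64)) :=
        mul_le_mul_of_nonneg_left hsum_ub hKpos.le
      have h2' : (1 / (64 * (T:ℝ) ^ 2)) * C ≤ OMS.lr T j ^ 2 * C :=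
        mul_le_mul_of_nonneg_right hnum_lb hCpos.le
      have h3' : (1 / (64 * (T:ℝ) ^ 2)) * C
          = (K:ℝ) * (OMS.numLR T : ℝ) * (T:ℝ) ^ 2 / 32 := by
        rw [hCdef]
        field_simp
        ring
      nlinarith
    · -- t₁ ≥ 2
      have hmem : t₁ - 1 ∈ Finset.Icc 1 T := by
        simp only [Finset.mem_Icc]
        omega
      have hd := hR.w'_mem (t₁ - 1) hmem
      rw [show t₁ - 1 + 1 = t₁ by omega] at hd
      have hge : OMS.epsLB K T ≤ R.w' t₁ i j := by
        by_cases hj : j ∈ R.Jset (t₁ - 1)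
        · exact hd.2.1 i j hj
        · exact le_of_eq (hd.2.2 i j hj).symm
      have h5 : 1 / C ≤ OMS.epsLB K T := by
        rw [heps]
        apply one_div_le_one_div_of_le (by positivity)
        rw [hCdef]
        nlinarith
      linarith
  have hw1pos : ∀ i j, 0 < R.w' t₁ i j := fun i j =>
    lt_of_lt_of_le (by positivity) (hw1 i j)
  -- facts about w' (t₂+1)
  have ht₂mem : t₂ ∈ Finset.Icc 1 T := by
    simp only [Finset.mem_Icc]
    omega
  have hw2mem := hR.w'_mem t₂ ht₂mem
  have hw2nn : ∀ i j, 0 ≤ R.w' (t₂ + 1) i j := hw2mem.1.1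
  have hw2le1 : ∀ i j, R.w' (t₂ + 1) i j ≤ 1 := by
    intro i j
    calc R.w' (t₂ + 1) i j ≤ ∑ j', R.w' (t₂ + 1) i j' :=
          Finset.single_le_sum (fun j' _ => hw2nn i j') (Finset.mem_univ j)
    _ ≤ ∑ i', ∑ j', R.w' (t₂ + 1) i' j' :=
          Finset.single_le_sum
            (fun i' _ => Finset.sum_nonneg fun j' _ => hw2nn i' j') (Finset.mem_univ i)
    _ = 1 := hw2mem.1.2
  -- log difference bound
  have hlog : ∀ i j, Real.log (R.w' (t₂ + 1) i j) - Real.log (R.w' t₁ i j) ≤ B := by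
    intro i j
    have h2 := Real.log_nonpos (hw2nn i j) (hw2le1 i j)
    have h1 : Real.log (1 / C) ≤ Real.log (R.w' t₁ i j) :=
      Real.log_le_log (by positivity) (hw1 i j)
    rw [one_div, Real.log_inv] at h1
    rw [hBdef]
    linarith
  -- ubar nonneg
  have hT3 : 1 / (T:ℝ) ^ 3 ≤ 1 := by
    rw [div_le_one (by positivity)]
    nlinarith
  have hubar_nn : ∀ i j, 0 ≤ ubar i j := by
    intro i j
    rw [hubar]
    split_ifs with h
    · have h1 := hu.1 i
      have h2 := heps_pos
      nlinarith
    · exact heps_pos.le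
  -- the Bregman difference identity
  have hiden : OMS.breg K T ubar (R.w' t₁) - OMS.breg K T ubar (R.w' (t₂ + 1)) =
      (∑ i, ∑ j, (1 / OMS.lr T j) * ubar i j *
        (Real.log (R.w' (t₂ + 1) i j) - Real.log (R.w' t₁ i j)))
      + ∑ j, ((∑ i, R.w' t₁ i j) - ∑ i, R.w' (t₂ + 1) i j) / OMS.lr T j := by
    rw [OMS.breg_expand, OMS.breg_expand]
    have e1 : ∀ (A B1 C1 : ℝ), A + B1 - (A + C1) = B1 - C1 := fun _ _ _ => by ring
    rw [e1, ← Finset.sum_sub_distrib]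
    have e2 : (∑ i, ((∑ j, (1 / OMS.lr T j) *
          (R.w' t₁ i j - ubar i j - ubar i j * Real.log (R.w' t₁ i j))) -
        ∑ j, (1 / OMS.lr T j) *
          (R.w' (t₂ + 1) i j - ubar i j - ubar i j * Real.log (R.w' (t₂ + 1) i j))))
        = ∑ i, ∑ j, ((1 / OMS.lr T j) * ubar i j *
            (Real.log (R.w' (t₂ + 1) i j) - Real.log (R.w' t₁ i j))
          + (1 / OMS.lr T j) * (R.w' t₁ i j - R.w' (t₂ + 1) i j)) := by
      refine Finset.sum_congr rfl fun i _ => ?_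
      rw [← Finset.sum_sub_distrib]
      refine Finset.sum_congr rfl fun j _ => ?_
      ring
    rw [e2]
    have e3 : (∑ i, ∑ j, ((1 / OMS.lr T j) * ubar i j *
            (Real.log (R.w' (t₂ + 1) i j) - Real.log (R.w' t₁ i j))
          + (1 / OMS.lr T j) * (R.w' t₁ i j - R.w' (t₂ + 1) i j)))
        = (∑ i, ∑ j, (1 / OMS.lr T j) * ubar i j *
            (Real.log (R.w' (t₂ + 1) i j) - Real.log (R.w' t₁ i j)))
          + ∑ i, ∑ j, (1 / OMS.lr T j) * (R.w' t₁ i j - R.w' (t₂ + 1) i j) := by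
      rw [← Finset.sum_add_distrib]
      refine Finset.sum_congr rfl fun i _ => ?_
      rw [← Finset.sum_add_distrib]
    rw [e3]
    congr 1
    rw [Finset.sum_comm]
    refine Finset.sum_congr rfl fun j _ => ?_
    rw [← Finset.mul_sum, Finset.sum_sub_distrib, one_div_mul_eq_div]
  -- bound on the log part
  have key : (∑ i, ∑ j, (1 / OMS.lr T j) * ubar i j *
        (Real.log (R.w' (t₂ + 1) i j) - Real.log (R.w' t₁ i j)))
      ≤ 4 * L / OMS.lr T jstar + 32 * L / (T:ℝ) ^ 2 := by
    have step1 : (∑ i, ∑ j, (1 / OMS.lr T j) * ubar i j *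
          (Real.log (R.w' (t₂ + 1) i j) - Real.log (R.w' t₁ i j)))
        ≤ ∑ i, ∑ j, (1 / OMS.lr T j) * ubar i j * B :=
      Finset.sum_le_sum fun i _ => Finset.sum_le_sum fun j _ =>
        mul_le_mul_of_nonneg_left (hlog i j)
          (mul_nonneg (one_div_pos.mpr (hlr_pos j)).le (hubar_nn i j))
    have step2 : (∑ i, ∑ j, (1 / OMS.lr T j) * ubar i j * B)
        = (∑ i, (1 / OMS.lr T jstar) * ubar i jstar * B)
          + ∑ j ∈ Finset.univ.erase jstar, ∑ i, (1 / OMS.lr T j) * ubar i j * B := by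
      rw [Finset.sum_comm, ← Finset.add_sum_erase _ _ (Finset.mem_univ jstar)]
    -- the jstar part
    have hsum_ubar : ∑ i, ubar i jstar ≤ 1 := by
      have he : ∑ i, ubar i jstar = (1 - 1 / (T:ℝ) ^ 3) + (K:ℝ) * OMS.epsLB K T := by
        have hptw : ∀ i, ubar i jstar = (1 - 1 / (T:ℝ) ^ 3) * u i + OMS.epsLB K T := by
          intro i; rw [hubar, if_pos rfl]
        simp only [hptw]
        rw [Finset.sum_add_distrib, ← Finset.mul_sum, hu.2, Finset.sum_const,
          Finset.card_univ, Fintype.card_fin, nsmul_eq_mul, mul_one]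
      have hKe : (K:ℝ) * OMS.epsLB K T = 1 / ((OMS.numLR T : ℝ) * (T:ℝ) ^ 3) := by
        rw [heps]
        field_simp
      have hMe : 1 / ((OMS.numLR T : ℝ) * (T:ℝ) ^ 3) ≤ 1 / (T:ℝ) ^ 3 := by
        apply one_div_le_one_div_of_le (by positivity)
        nlinarith
      rw [he, hKe]
      linarith
    have part1 : (∑ i, (1 / OMS.lr T jstar) * ubar i jstar * B)
        ≤ 4 * L / OMS.lr T jstar := by
      have he : (∑ i, (1 / OMS.lr T jstar) * ubar i jstar * B)
          = (1 / OMS.lr T jstar) * ((∑ i, ubar i jstar) * B) := by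
        rw [← Finset.sum_mul, ← Finset.mul_sum, mul_assoc]
      rw [he]
      have hSB : (∑ i, ubar i jstar) * B ≤ 1 * (4 * L) :=
        mul_le_mul hsum_ubar hB4L hBnn zero_le_one
      have hpos : (0:ℝ) ≤ 1 / OMS.lr T jstar := (one_div_pos.mpr (hlr_pos jstar)).le
      calc (1 / OMS.lr T jstar) * ((∑ i, ubar i jstar) * B)
          ≤ (1 / OMS.lr T jstar) * (1 * (4 * L)) := mul_le_mul_of_nonneg_left hSB hpos
      _ = 4 * L / OMS.lr T jstar := by ring
    -- the erase part
    have part2 : (∑ j ∈ Finset.univ.erase jstar, ∑ i, (1 / OMS.lr T j) * ubar i j * B)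
        ≤ 32 * L / (T:ℝ) ^ 2 := by
      set c : ℝ := 8 * (T:ℝ) * OMS.epsLB K T * B with hcdef
      have hcnn : 0 ≤ c := by
        rw [hcdef]
        have h := heps_pos
        positivity
      have hterm : ∀ j ∈ Finset.univ.erase jstar,
          (∑ i, (1 / OMS.lr T j) * ubar i j * B) ≤ (K:ℝ) * c := by
        intro j hj
        have hjne : j ≠ jstar := (Finset.mem_erase.mp hj).1
        have he : ∀ i : Fin K, (1 / OMS.lr T j) * ubar i j * B
            = (1 / OMS.lr T j) * OMS.epsLB K T * B := by
          intro i; rw [hubar, if_neg hjne]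
        rw [Finset.sum_congr rfl fun i _ => he i, Finset.sum_const,
          Finset.card_univ, Fintype.card_fin, nsmul_eq_mul]
        have h1 : (1 / OMS.lr T j) * OMS.epsLB K T * B ≤ c := by
          rw [hcdef]
          have h2 := hinv_lr j
          have h0 : (0:ℝ) ≤ 1 / OMS.lr T j := (one_div_pos.mpr (hlr_pos j)).le
          nlinarith [heps_pos, hBnn]
        exact mul_le_mul_of_nonneg_left h1 hKpos.le
      have hsum : (∑ j ∈ Finset.univ.erase jstar, ∑ i, (1 / OMS.lr T j) * ubar i j * B)
          ≤ ((Finset.univ.erase jstar).card : ℝ) * ((K:ℝ) * c) := by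
        have h := Finset.sum_le_card_nsmul (Finset.univ.erase jstar)
          (fun j => ∑ i, (1 / OMS.lr T j) * ubar i j * B) ((K:ℝ) * c) hterm
        simpa [nsmul_eq_mul] using h
      have hcard : ((Finset.univ.erase jstar).card : ℝ) ≤ (OMS.numLR T : ℝ) := by
        have h : (Finset.univ.erase jstar).card ≤ OMS.numLR T := by
          calc (Finset.univ.erase jstar).card ≤ (Finset.univ : Finset (Fin (OMS.numLR T))).card :=
                Finset.card_le_card (Finset.erase_subset _ _)
          _ = OMS.numLR T := by simp
        exact_mod_cast h
      have hMc : (OMS.numLR T : ℝ) * ((K:ℝ) * c) = 8 * B / (T:ℝ) ^ 2 := by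
        rw [hcdef, heps]
        field_simp
      have h8B : 8 * B / (T:ℝ) ^ 2 ≤ 32 * L / (T:ℝ) ^ 2 := by
        apply div_le_div_of_nonneg_right ?_ (by positivity)
        linarith
      have hKc : 0 ≤ (K:ℝ) * c := mul_nonneg hKpos.le hcnn
      calc (∑ j ∈ Finset.univ.erase jstar, ∑ i, (1 / OMS.lr T j) * ubar i j * B)
          ≤ ((Finset.univ.erase jstar).card : ℝ) * ((K:ℝ) * c) := hsum
      _ ≤ (OMS.numLR T : ℝ) * ((K:ℝ) * c) := mul_le_mul_of_nonneg_right hcard hKc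
      _ = 8 * B / (T:ℝ) ^ 2 := hMc
      _ ≤ 32 * L / (T:ℝ) ^ 2 := h8B
    calc (∑ i, ∑ j, (1 / OMS.lr T j) * ubar i j *
          (Real.log (R.w' (t₂ + 1) i j) - Real.log (R.w' t₁ i j)))
        ≤ ∑ i, ∑ j, (1 / OMS.lr T j) * ubar i j * B := step1
    _ = _ := step2
    _ ≤ 4 * L / OMS.lr T jstar + 32 * L / (T:ℝ) ^ 2 := add_le_add part1 part2
  refine ⟨tele_sum _ t₁ t₂ ht₁₂, ?_⟩
  rw [hiden]
  linarith [key]
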